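/- arXiv:math-ph/0204030 — 3 statements merged into one kernel-verified Lean document; each statement's English description precedes it below -/
import Mathlib

section
/- For every M > 0 and every s ∈ (0,1] there exists a constant c > 0, depending only on M and s, with the following property: for every interval J ⊆ ℝ, every measurable potential V : ℝ → ℝ, every E ∈ ℝ such that |V(x) − E| ≤ M for almost every x ∈ J, every twice continuously differentiable function ψ : ℝ → ℂ satisfying the eigenvalue equation −ψ''(x) + V(x)ψ(x) = E ψ(x) for all x ∈ J, and every k ∈ ℝ with [k − 1/2, k + 1/2] ⊆ J, one has ∫_{k−s/2}^{k+s/2} |ψ(x)|² dx ≥ c ∫_{k−1/2}^{k+1/2} |ψ(x)|² dx. -/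
open MeasureTheory Set
open scoped RealInnerProductSpace


lemma gron_fwd {L : ℝ} {u u' : ℝ → ℝ} (hu : ∀ x, HasDerivAt u (u' x) x)
    {a b : ℝ} (hpos : ∀ t ∈ Icc a b, 0 ≤ u t)
    (hder : ∀ t ∈ Icc a b, |u' t| ≤ L * u t) :
    ∀ x ∈ Icc a b, u x ≤ Real.exp (L * (x - a)) * u a := by
  intro x hx
  have hab : a ≤ b := hx.1.trans hx.2
  have h := norm_le_gronwallBound_of_norm_deriv_right_le (f := u) (f' := u')
    (δ := u a) (K := L) (ε := 0) (a := a) (b := b)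
    (fun t _ => (hu t).continuousAt.continuousWithinAt)
    (fun t _ => (hu t).hasDerivWithinAt)
    (le_of_eq (abs_of_nonneg (hpos a ⟨le_refl a, hab⟩)))
    (fun t ht => by
      have ht' : t ∈ Icc a b := ⟨ht.1, ht.2.le⟩
      have := hder t ht'
      rw [Real.norm_eq_abs, Real.norm_eq_abs, abs_of_nonneg (hpos t ht')]
      linarith)
    x hx
  rw [gronwallBound_ε0] at h
  calc u x ≤ |u x| := le_abs_self _
    _ ≤ u a * Real.exp (L * (x - a)) := h
    _ = Real.exp (L * (x - a)) * u a := mul_comm _ _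

lemma gron_center {L : ℝ} (hL : 0 ≤ L) {u u' : ℝ → ℝ} (hu : ∀ x, HasDerivAt u (u' x) x)
    {k r : ℝ} (hr : 0 ≤ r) (hpos : ∀ t ∈ Icc (k - r) (k + r), 0 ≤ u t)
    (hder : ∀ t ∈ Icc (k - r) (k + r), |u' t| ≤ L * u t) :
    ∀ x ∈ Icc (k - r) (k + r), u x ≤ Real.exp (L * r) * u k := by
  intro x hx
  have hk : k ∈ Icc (k - r) (k + r) := by constructor <;> linarith
  have hexp : ∀ y : ℝ, y ≤ r → Real.exp (L * y) ≤ Real.exp (L * r) := fun y hy =>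
    Real.exp_le_exp.2 (mul_le_mul_of_nonneg_left hy hL)
  rcases le_or_gt k x with hkx | hxk
  · have h := gron_fwd hu (a := k) (b := k + r)
      (fun t ht => hpos t ⟨by linarith [ht.1], ht.2⟩)
      (fun t ht => hder t ⟨by linarith [ht.1], ht.2⟩) x ⟨hkx, hx.2⟩
    refine h.trans (mul_le_mul_of_nonneg_right (hexp _ (by linarith [hx.2])) (hpos k hk))
  · -- reflect
    set v : ℝ → ℝ := fun t => u (2 * k - t) with hv
    set v' : ℝ → ℝ := fun t => u' (2 * k - t) * (-1) with hv'
    have hvd : ∀ t, HasDerivAt v (v' t) t := by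
      intro t
      have h1 : HasDerivAt (fun t : ℝ => 2 * k - t) (-1) t := by
        exact (hasDerivAt_id' t).const_sub (2*k)
      exact (hu (2 * k - t)).comp t h1
    have key : ∀ t ∈ Icc k (k + r), 2 * k - t ∈ Icc (k - r) (k + r) := by
      intro t ht; constructor <;> [linarith [ht.2]; linarith [ht.1]]
    have h := gron_fwd hvd (a := k) (b := k + r)
      (fun t ht => hpos _ (key t ht))
      (fun t ht => by
        simpa [hv', abs_mul] using hder _ (key t ht))
      (2 * k - x) ⟨by linarith, by linarith [hx.1]⟩
    have : u x ≤ Real.exp (L * (k - x)) * u k := by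
      simpa [hv, show 2 * k - (2 * k - x) = x by ring,
        show 2 * k - x - k = k - x by ring, show 2*k-k = k by ring] using h
    refine this.trans (mul_le_mul_of_nonneg_right (hexp _ (by linarith [hx.1])) (hpos k hk))


lemma taylor_C2 {ψ : ℝ → ℂ} (hψ1 : Differentiable ℝ ψ) (hψ2 : Differentiable ℝ (deriv ψ))
    (hcont : Continuous (deriv (deriv ψ))) (k x : ℝ) :
    ψ x - (ψ k + (x - k) • deriv ψ k) = ∫ t in k..x, (x - t) • deriv (deriv ψ) t := by
  have hF : ∀ t, HasDerivAt (fun t => ψ t + (x - t) • deriv ψ t)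
      ((x - t) • deriv (deriv ψ) t) t := by
    intro t
    have h3 : HasDerivAt (fun t : ℝ => x - t) (-1) t := by
      exact (hasDerivAt_id' t).const_sub x
    have h4 := h3.smul (hψ2 t).hasDerivAt
    have h5 := (hψ1 t).hasDerivAt.add h4
    refine h5.congr_deriv ?_
    simp only [neg_smul, one_smul]
    module
  have hint : IntervalIntegrable (fun t => (x - t) • deriv (deriv ψ) t) volume k x :=
    (((continuous_const.sub continuous_id).smul hcont)).intervalIntegrable k x
  have := intervalIntegral.integral_eq_sub_of_hasDerivAt (fun t _ => hF t) hint
  rw [this]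
  simp


set_option maxHeartbeats 1000000 in
/-- Quantitative unique continuation: for every `M > 0` and `s ∈ (0,1]` there is `c > 0`
(depending only on `M` and `s`) such that for any interval `J`, any measurable potential `V`,
any energy `E` with `|V - E| ≤ M` a.e. on `J`, any `C²` eigenfunction `ψ` of `-ψ'' + Vψ = Eψ`
on `J`, and any `k` with `[k - 1/2, k + 1/2] ⊆ J`, the `L²` mass of `ψ` on `[k - s/2, k + s/2]`
dominates `c` times its mass on `[k - 1/2, k + 1/2]`. -/
theorem unique_continuation_local
    (M : ℝ) (hM : 0 < M) (s : ℝ) (hs : s ∈ Set.Ioc (0 : ℝ) 1) :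
    ∃ c : ℝ, 0 < c ∧
      ∀ (J : Set ℝ), J.OrdConnected →
      ∀ (V : ℝ → ℝ), Measurable V →
      ∀ (E : ℝ), (∀ᵐ x ∂(volume.restrict J), |V x - E| ≤ M) →
      ∀ (ψ : ℝ → ℂ), ContDiff ℝ 2 ψ →
      (∀ x ∈ J, -(deriv (deriv ψ) x) + (V x : ℂ) * ψ x = (E : ℂ) * ψ x) →
      ∀ (k : ℝ), Set.Icc (k - 1/2) (k + 1/2) ⊆ J →
      c * ∫ x in Set.Icc (k - 1/2) (k + 1/2), ‖ψ x‖ ^ 2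
        ≤ ∫ x in Set.Icc (k - s/2) (k + s/2), ‖ψ x‖ ^ 2 := by
  obtain ⟨hs0, hs1⟩ := hs
  set L : ℝ := 1 + M with hLdef
  have hLpos : 0 < L := by simp only [hLdef]; linarith
  set K : ℝ := Real.exp L with hKdef
  have hKpos : 0 < K := Real.exp_pos L
  have hK1 : 1 ≤ K := Real.one_le_exp hLpos.le
  have hsqrtK : 0 < Real.sqrt K := Real.sqrt_pos.2 hKpos
  set T : ℝ := min (s/2) (1/(12*M*Real.sqrt K)) with hTdef
  have hTpos : 0 < T := lt_min (by linarith) (by positivity)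
  have hTs : T ≤ s/2 := min_le_left _ _
  have hThalf : T ≤ 1/2 := hTs.trans (by linarith)
  have hT1 : T ≤ 1 := by linarith
  have hT2 : M^2 * K * T^2 ≤ 1/128 := by
    have h1 : T ≤ 1/(12*M*Real.sqrt K) := min_le_right _ _
    have h2 : T^2 ≤ (1/(12*M*Real.sqrt K))^2 := by
      have := mul_le_mul h1 h1 hTpos.le (by positivity)
      nlinarith
    have h3 : (1/(12*M*Real.sqrt K))^2 = 1/(144*M^2*K) := by
      rw [div_pow, mul_pow, mul_pow, Real.sq_sqrt hKpos.le]
      norm_num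
    rw [h3] at h2
    have h4 : M^2*K*T^2 ≤ M^2*K*(1/(144*M^2*K)) := by
      apply mul_le_mul_of_nonneg_left h2 (by positivity)
    have h5 : M^2*K*(1/(144*M^2*K)) = 1/144 := by
      field_simp
    rw [h5] at h4
    linarith
  refine ⟨T^3/(128*K), by positivity, ?_⟩
  intro J hJ V hV E hVE ψ hψ heig k hIJ
  -- regularity
  have hreg : Differentiable ℝ (deriv ψ) ∧ Continuous (deriv (deriv ψ)) ∧ Differentiable ℝ ψ := by
    have h2 : ContDiff ℝ (1+1 : ℕ) ψ := by exact_mod_cast hψ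
    rw [show ((1+1:ℕ) : WithTop ℕ∞) = (1:WithTop ℕ∞)+1 by norm_cast] at h2
    have h3 := contDiff_succ_iff_deriv.mp h2
    have h1 := contDiff_one_iff_deriv.mp h3.2.2
    exact ⟨h1.1, h1.2, h3.1⟩
  obtain ⟨hψ2, hcont2, hψ1⟩ := hreg
  have hψc : Continuous ψ := hψ1.continuous
  -- eigen-equation rearranged
  have heig' : ∀ x ∈ J, deriv (deriv ψ) x = ((V x - E : ℝ) : ℂ) * ψ x := by
    intro x hx
    have h := heig x hx
    push_cast
    linear_combination -h
  -- pointwise bound on ψ'' on the unit interval, by density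
  have hbd : ∀ x ∈ Icc (k-1/2) (k+1/2), ‖deriv (deriv ψ) x‖ ≤ M * ‖ψ x‖ := by
    have hNnull : volume ({x | M < |V x - E|} ∩ J) = 0 := by
      have hNm : MeasurableSet {x | M < |V x - E|} :=
        measurableSet_lt measurable_const ((hV.sub measurable_const).abs)
      have h0 : (volume.restrict J) {x | ¬ |V x - E| ≤ M} = 0 := by
        exact hVE
      rw [show {x | ¬ |V x - E| ≤ M} = {x | M < |V x - E|} by ext y; simp [not_le]] at h0
      rwa [Measure.restrict_apply hNm] at h0
    intro x hx
    have hclosed : IsClosed {y | ‖deriv (deriv ψ) y‖ - M * ‖ψ y‖ ≤ 0} :=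
      isClosed_le (Continuous.sub hcont2.norm (continuous_const.mul hψc.norm)) continuous_const
    have hsub : {y | |V y - E| ≤ M} ∩ Icc (k-1/2) (k+1/2)
        ⊆ {y | ‖deriv (deriv ψ) y‖ - M * ‖ψ y‖ ≤ 0} := by
      rintro y ⟨hyA, hyI⟩
      have h := heig' y (hIJ hyI)
      simp only [mem_setOf_eq, sub_nonpos]
      rw [h, norm_mul, Complex.norm_real, Real.norm_eq_abs]
      exact mul_le_mul_of_nonneg_right hyA (norm_nonneg _)
    have hxc : x ∈ closure ({y | |V y - E| ≤ M} ∩ Icc (k-1/2) (k+1/2)) := by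
      rw [Metric.mem_closure_iff]
      intro ε hε
      by_contra hcon
      push_neg at hcon
      set a := max (k-1/2) (x-ε/3) with hadef
      set b := min (k+1/2) (x+ε/3) with hbdef
      have hab : a < b := by
        apply max_lt <;> apply lt_min
        · linarith
        · linarith [hx.1]
        · linarith [hx.2]
        · linarith
      have hsub2 : Icc a b ⊆ {y | M < |V y - E|} ∩ J := by
        intro y hy
        have hyI : y ∈ Icc (k-1/2) (k+1/2) :=
          ⟨le_trans (le_max_left _ _) hy.1, le_trans hy.2 (min_le_left _ _)⟩
        refine ⟨?_, hIJ hyI⟩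
        by_contra hyA
        simp only [mem_setOf_eq, not_lt] at hyA
        have hd := hcon y ⟨hyA, hyI⟩
        have h1 : x - ε/3 ≤ y := le_trans (le_max_right _ _) hy.1
        have h2 : y ≤ x + ε/3 := le_trans hy.2 (min_le_right _ _)
        have : dist x y < ε := by
          rw [Real.dist_eq, abs_lt]
          constructor <;> linarith
        linarith
      have h0 := measure_mono_null hsub2 hNnull
      rw [Real.volume_Icc] at h0
      have := ENNReal.ofReal_eq_zero.1 h0
      linarith
    have := closure_minimal hsub hclosed hxc
    simp only [mem_setOf_eq] at this
    linarith
  -- the energy function u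
  set u : ℝ → ℝ := fun x => ⟪ψ x, ψ x⟫ + ⟪deriv ψ x, deriv ψ x⟫ with hudef
  have hu_eq : ∀ x, u x = ‖ψ x‖^2 + ‖deriv ψ x‖^2 := by
    intro x; simp [hudef, real_inner_self_eq_norm_sq]
  have hupos : ∀ x, 0 ≤ u x := by
    intro x; rw [hu_eq]; positivity
  set u' : ℝ → ℝ := fun x =>
    (⟪ψ x, deriv ψ x⟫ + ⟪deriv ψ x, ψ x⟫)
      + (⟪deriv ψ x, deriv (deriv ψ) x⟫ + ⟪deriv (deriv ψ) x, deriv ψ x⟫) with hu'def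
  have hu : ∀ x, HasDerivAt u (u' x) x := fun x =>
    ((hψ1 x).hasDerivAt.inner ℝ (hψ1 x).hasDerivAt).add
      ((hψ2 x).hasDerivAt.inner ℝ (hψ2 x).hasDerivAt)
  have hderb : ∀ t ∈ Icc (k-1/2) (k+1/2), |u' t| ≤ L * u t := by
    intro t ht
    have h1 : |⟪ψ t, deriv ψ t⟫| ≤ ‖ψ t‖ * ‖deriv ψ t‖ := abs_real_inner_le_norm _ _
    have h2 : |⟪deriv ψ t, ψ t⟫| ≤ ‖deriv ψ t‖ * ‖ψ t‖ := abs_real_inner_le_norm _ _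
    have h3 : |⟪deriv ψ t, deriv (deriv ψ) t⟫| ≤ ‖deriv ψ t‖ * ‖deriv (deriv ψ) t‖ :=
      abs_real_inner_le_norm _ _
    have h4 : |⟪deriv (deriv ψ) t, deriv ψ t⟫| ≤ ‖deriv (deriv ψ) t‖ * ‖deriv ψ t‖ :=
      abs_real_inner_le_norm _ _
    have h5 := hbd t ht
    have h6 : |u' t| ≤ ‖ψ t‖ * ‖deriv ψ t‖ + ‖deriv ψ t‖ * ‖ψ t‖
        + (‖deriv ψ t‖ * ‖deriv (deriv ψ) t‖ + ‖deriv (deriv ψ) t‖ * ‖deriv ψ t‖) := by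
      calc |u' t| ≤ |⟪ψ t, deriv ψ t⟫ + ⟪deriv ψ t, ψ t⟫|
            + |⟪deriv ψ t, deriv (deriv ψ) t⟫ + ⟪deriv (deriv ψ) t, deriv ψ t⟫| :=
          abs_add_le _ _
        _ ≤ (|⟪ψ t, deriv ψ t⟫| + |⟪deriv ψ t, ψ t⟫|)
            + (|⟪deriv ψ t, deriv (deriv ψ) t⟫| + |⟪deriv (deriv ψ) t, deriv ψ t⟫|) := by
          gcongr <;> exact abs_add_le _ _
        _ ≤ _ := by gcongr
    rw [hu_eq]
    have hn1 : (0:ℝ) ≤ ‖ψ t‖ := norm_nonneg _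
    have hn2 : (0:ℝ) ≤ ‖deriv ψ t‖ := norm_nonneg _
    have hn3 : (0:ℝ) ≤ ‖deriv (deriv ψ) t‖ := norm_nonneg _
    have hsq : 2 * (‖ψ t‖ * ‖deriv ψ t‖) ≤ ‖ψ t‖^2 + ‖deriv ψ t‖^2 := by
      nlinarith [sq_nonneg (‖ψ t‖ - ‖deriv ψ t‖)]
    simp only [hLdef]
    nlinarith [mul_le_mul_of_nonneg_left h5 hn2]
  -- Gronwall bound on the unit interval
  have hub : ∀ x ∈ Icc (k-1/2) (k+1/2), u x ≤ K * u k := by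
    intro x hx
    have hx' : x ∈ Icc (k - 1/2) (k + 1/2) := hx
    have h := gron_center hLpos.le hu (k := k) (r := 1/2) (by norm_num)
      (fun t ht => hupos t) hderb x hx'
    refine h.trans ?_
    apply mul_le_mul_of_nonneg_right _ (hupos k)
    rw [hKdef]
    exact Real.exp_le_exp.2 (by nlinarith)
  -- upper bound for the integral over the unit interval
  have hcont_sq : Continuous fun x : ℝ => ‖ψ x‖^2 := (hψc.norm).pow 2
  have hup : ∫ x in Icc (k-1/2) (k+1/2), ‖ψ x‖^2 ≤ K * u k := by
    have hmono : ∫ x in Icc (k-1/2) (k+1/2), ‖ψ x‖^2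
        ≤ ∫ _x in Icc (k-1/2) (k+1/2), K * u k := by
      apply setIntegral_mono_on (hcont_sq.integrableOn_Icc)
        (integrableOn_const measure_Icc_lt_top.ne) measurableSet_Icc
      intro x hx
      have h1 := hub x hx
      have h2 : ‖ψ x‖^2 ≤ u x := by rw [hu_eq]; nlinarith [sq_nonneg ‖deriv ψ x‖]
      linarith
    rwa [setIntegral_const, Real.volume_real_Icc_of_le (by linarith), show k+1/2-(k-1/2) = 1 by ring,
      one_smul] at hmono
  -- sup bound S for ψ on [k, k+T]
  set S : ℝ := Real.sqrt (K * u k) with hSdef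
  have hS0 : 0 ≤ S := Real.sqrt_nonneg _
  have hSsq : S^2 = K * u k := Real.sq_sqrt (mul_nonneg hKpos.le (hupos k))
  have hS : ∀ t ∈ Icc k (k+T), ‖ψ t‖ ≤ S := by
    intro t ht
    have htI : t ∈ Icc (k-1/2) (k+1/2) := ⟨by linarith [ht.1], by linarith [ht.2, hThalf]⟩
    have h1 : ‖ψ t‖^2 ≤ K * u k := by
      have h0 := hub t htI
      have h2 : ‖ψ t‖^2 ≤ u t := by rw [hu_eq]; nlinarith [sq_nonneg ‖deriv ψ t‖]
      linarith
    calc ‖ψ t‖ = Real.sqrt (‖ψ t‖^2) := (Real.sqrt_sq (norm_nonneg _)).symm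
      _ ≤ S := Real.sqrt_le_sqrt h1
  -- Taylor remainder bound
  have hR : ∀ h ∈ Icc (0:ℝ) T, ‖ψ (k+h) - (ψ k + h • deriv ψ k)‖ ≤ M * S * T^2 := by
    intro h hh
    have htay := taylor_C2 hψ1 hψ2 hcont2 k (k+h)
    rw [show k + h - k = h by ring] at htay
    rw [htay]
    have hbound : ∀ t ∈ Set.uIoc k (k+h), ‖(k + h - t) • deriv (deriv ψ) t‖ ≤ T * (M * S) := by
      intro t ht
      rw [Set.uIoc_of_le (by linarith [hh.1])] at ht
      have htI : t ∈ Icc (k-1/2) (k+1/2) :=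
        ⟨by linarith [ht.1.le], by linarith [ht.2, hh.2, hThalf]⟩
      have htT : t ∈ Icc k (k+T) := ⟨ht.1.le, by linarith [ht.2, hh.2]⟩
      rw [norm_smul, Real.norm_eq_abs]
      have h1 : |k + h - t| ≤ T := by
        rw [abs_le]
        constructor
        · linarith [ht.2, hh.1]
        · linarith [ht.1.le, hh.2]
      have h2 : ‖deriv (deriv ψ) t‖ ≤ M * S :=
        (hbd t htI).trans (mul_le_mul_of_nonneg_left (hS t htT) hM.le)
      exact mul_le_mul h1 h2 (norm_nonneg _) hTpos.le
    have hnle := intervalIntegral.norm_integral_le_of_norm_le_const hbound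
    rw [show k + h - k = h by ring] at hnle
    refine hnle.trans ?_
    rw [abs_of_nonneg hh.1]
    have := mul_le_mul_of_nonneg_left hh.2 (by positivity : (0:ℝ) ≤ T*(M*S))
    nlinarith [this]
  -- pointwise lower bound on the small interval
  have hptw : ∀ h ∈ Icc (0:ℝ) T,
      ‖ψ k + h • deriv ψ k‖^2/2 - (M*S*T^2)^2 ≤ ‖ψ (k+h)‖^2 := by
    intro h hh
    have h1 := hR h hh
    have hE0 : (0:ℝ) ≤ M*S*T^2 := by positivity
    have h2 : ‖ψ k + h • deriv ψ k‖ ≤ ‖ψ (k+h)‖ + M*S*T^2 := by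
      calc ‖ψ k + h • deriv ψ k‖
          = ‖ψ (k+h) - (ψ (k+h) - (ψ k + h • deriv ψ k))‖ := by rw [sub_sub_cancel]
        _ ≤ ‖ψ (k+h)‖ + ‖ψ (k+h) - (ψ k + h • deriv ψ k)‖ := norm_sub_le _ _
        _ ≤ _ := by linarith
    nlinarith [mul_le_mul h2 h2 (norm_nonneg _) (add_nonneg (norm_nonneg _) hE0),
      sq_nonneg (‖ψ (k+h)‖ - M*S*T^2), norm_nonneg (ψ k + h • deriv ψ k)]
  -- integral of the linear approximation
  set r : ℝ := ⟪ψ k, deriv ψ k⟫ with hrdef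
  have hr : |r| ≤ ‖ψ k‖ * ‖deriv ψ k‖ := abs_real_inner_le_norm _ _
  have hPexp : ∀ h : ℝ, ‖ψ k + h • deriv ψ k‖^2
      = ‖ψ k‖^2 + (2*r)*h + ‖deriv ψ k‖^2*h^2 := by
    intro h
    rw [norm_add_sq_real, real_inner_smul_right, norm_smul, Real.norm_eq_abs, mul_pow, sq_abs,
      hrdef]
    ring
  have hIntP : ∫ h in (0:ℝ)..T, ‖ψ k + h • deriv ψ k‖^2
      = ‖ψ k‖^2*T + r*T^2 + ‖deriv ψ k‖^2*T^3/3 := by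
    simp_rw [hPexp]
    have iA : IntervalIntegrable (fun h : ℝ => ‖ψ k‖^2 + 2*r*h) volume 0 T :=
      (continuous_const.add (continuous_const.mul continuous_id')).intervalIntegrable _ _
    have iB : IntervalIntegrable (fun h : ℝ => ‖deriv ψ k‖^2 * h^2) volume 0 T :=
      (continuous_const.mul (continuous_pow 2)).intervalIntegrable _ _
    have iC : IntervalIntegrable (fun h : ℝ => 2*r*h) volume 0 T :=
      (continuous_const.mul continuous_id').intervalIntegrable _ _
    rw [intervalIntegral.integral_add iA iB,
      intervalIntegral.integral_add intervalIntegrable_const iC,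
      intervalIntegral.integral_const,
      show (fun h : ℝ => 2*r*h) = fun h : ℝ => (2*r)*h by rfl,
      intervalIntegral.integral_const_mul,
      show (fun h : ℝ => ‖deriv ψ k‖^2 * h^2) = fun h : ℝ => ‖deriv ψ k‖^2 * h^2 by rfl,
      intervalIntegral.integral_const_mul, integral_id, integral_pow]
    push_cast
    simp only [smul_eq_mul]
    ring
  -- key quadratic lower bound
  have key : (T^2/32)*(‖ψ k‖^2 + ‖deriv ψ k‖^2)
      ≤ ‖ψ k‖^2 + T*r + T^2*‖deriv ψ k‖^2/3 := by
    have h0 : -(‖ψ k‖*‖deriv ψ k‖) ≤ r := by linarith [neg_abs_le r]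
    have h1 := mul_le_mul_of_nonneg_left h0 hTpos.le
    have h2 : T^2 ≤ 1 := by nlinarith
    nlinarith [sq_nonneg (31*‖ψ k‖ - 16*(T*‖deriv ψ k‖)), sq_nonneg (T*‖deriv ψ k‖),
      mul_le_mul_of_nonneg_right h2 (sq_nonneg ‖ψ k‖)]
  -- lower bound for the integral over the small interval
  have hlow : (T^3/128) * u k ≤ ∫ x in Icc (k - s/2) (k + s/2), ‖ψ x‖^2 := by
    have step1 : ∫ x in Icc k (k+T), ‖ψ x‖^2 ≤ ∫ x in Icc (k - s/2) (k + s/2), ‖ψ x‖^2 :=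
      setIntegral_mono_set hcont_sq.integrableOn_Icc
        (ae_of_all _ fun x => sq_nonneg _)
        (HasSubset.Subset.eventuallyLE (Icc_subset_Icc (by linarith) (by linarith)))
    have step2 : ∫ h in (0:ℝ)..T, ‖ψ (k+h)‖^2 = ∫ x in Icc k (k+T), ‖ψ x‖^2 := by
      rw [intervalIntegral.integral_comp_add_left (fun x => ‖ψ x‖^2) k,
        integral_Icc_eq_integral_Ioc,
        ← intervalIntegral.integral_of_le (by linarith : k ≤ k + T), add_zero]
    have step3 : ∫ h in (0:ℝ)..T, (‖ψ k + h • deriv ψ k‖^2/2 - (M*S*T^2)^2)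
        = (‖ψ k‖^2*T + r*T^2 + ‖deriv ψ k‖^2*T^3/3)/2 - (M*S*T^2)^2*T := by
      have iD : IntervalIntegrable (fun h : ℝ => ‖ψ k + h • deriv ψ k‖^2/2) volume 0 T :=
        (((continuous_const.add (continuous_id'.smul continuous_const)).norm.pow 2).div_const
          2).intervalIntegrable _ _
      rw [intervalIntegral.integral_sub iD intervalIntegrable_const,
        intervalIntegral.integral_div, hIntP, intervalIntegral.integral_const]
      simp only [smul_eq_mul, sub_zero]
      ring
    have hint1 : ∫ h in (0:ℝ)..T, (‖ψ k + h • deriv ψ k‖^2/2 - (M*S*T^2)^2)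
        ≤ ∫ h in (0:ℝ)..T, ‖ψ (k+h)‖^2 :=
      intervalIntegral.integral_mono_on hTpos.le
        (((((continuous_const.add (continuous_id'.smul continuous_const)).norm.pow 2).div_const
            2).sub continuous_const).intervalIntegrable _ _)
        ((hcont_sq.comp (continuous_const.add continuous_id)).intervalIntegrable _ _) hptw
    have main : (T^3/128) * u k
        ≤ (‖ψ k‖^2*T + r*T^2 + ‖deriv ψ k‖^2*T^3/3)/2 - (M*S*T^2)^2*T := by
      rw [hu_eq]
      have hm1 := mul_le_mul_of_nonneg_left key (by positivity : (0:ℝ) ≤ T/2)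
      have hu0 : (0:ℝ) ≤ ‖ψ k‖^2 + ‖deriv ψ k‖^2 := by positivity
      have he2 : (M*S*T^2)^2*T = M^2*K*T^2 * (T^3 * (‖ψ k‖^2 + ‖deriv ψ k‖^2)) := by
        have hs2 : S^2 = K * (‖ψ k‖^2 + ‖deriv ψ k‖^2) := by rw [hSsq, hu_eq]
        linear_combination (M^2*T^5) * hs2
      have hm2 : M^2*K*T^2 * (T^3 * (‖ψ k‖^2 + ‖deriv ψ k‖^2))
          ≤ (1/128) * (T^3 * (‖ψ k‖^2 + ‖deriv ψ k‖^2)) :=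
        mul_le_mul_of_nonneg_right hT2 (mul_nonneg (by positivity) hu0)
      rw [he2]
      nlinarith [hm1, hm2]
    calc (T^3/128) * u k
        ≤ (‖ψ k‖^2*T + r*T^2 + ‖deriv ψ k‖^2*T^3/3)/2 - (M*S*T^2)^2*T := main
      _ = ∫ h in (0:ℝ)..T, (‖ψ k + h • deriv ψ k‖^2/2 - (M*S*T^2)^2) := step3.symm
      _ ≤ ∫ h in (0:ℝ)..T, ‖ψ (k+h)‖^2 := hint1
      _ = ∫ x in Icc k (k+T), ‖ψ x‖^2 := step2
      _ ≤ _ := step1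
  calc T^3/(128*K) * ∫ x in Icc (k-1/2) (k+1/2), ‖ψ x‖^2
      ≤ T^3/(128*K) * (K * u k) := mul_le_mul_of_nonneg_left hup (by positivity)
    _ = (T^3/128) * u k := by field_simp
    _ ≤ _ := hlow
end

section
/- Let ψ : ℝ → ℂ be continuously differentiable, let a < b be real numbers, and define φ(y) := ∫_{a+y}^{b+y} |ψ(x)|² dx. Then φ is differentiable on ℝ and for every y ∈ ℝ one has |φ'(y)| ≤ 2 ‖ψ‖_{L²([a+y, b+y])} · ‖ψ'‖_{L²([a+y, b+y])}. -/
open MeasureTheory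

private lemma rpow_two' (x : ℝ) : x ^ (2:ℝ) = x ^ 2 := by
  rw [show (2:ℝ) = ((2:ℕ):ℝ) by norm_num, Real.rpow_natCast]

/-- Derivative of the translated `L²` mass: if `ψ` is `C¹` and
`φ(y) = ∫_{a+y}^{b+y} |ψ|²`, then `φ` is differentiable and
`|φ'(y)| ≤ 2 ‖ψ‖_{L²([a+y,b+y])} ‖ψ'‖_{L²([a+y,b+y])}`. -/
theorem deriv_translated_mass
    (ψ : ℝ → ℂ) (hψ : ContDiff ℝ 1 ψ) (a b : ℝ) (hab : a < b)
    (φ : ℝ → ℝ) (hφ : ∀ y, φ y = ∫ x in Set.Icc (a + y) (b + y), ‖ψ x‖ ^ 2) :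
    Differentiable ℝ φ ∧
      ∀ y, |deriv φ y| ≤
        2 * Real.sqrt (∫ x in Set.Icc (a + y) (b + y), ‖ψ x‖ ^ 2)
          * Real.sqrt (∫ x in Set.Icc (a + y) (b + y), ‖deriv ψ x‖ ^ 2) := by
  have hψd : Differentiable ℝ ψ := hψ.differentiable one_ne_zero
  have hψc : Continuous ψ := hψd.continuous
  have hψ'c : Continuous (deriv ψ) := hψ.continuous_deriv le_rfl
  set g : ℝ → ℝ := fun x => ‖ψ x‖ ^ 2 with hg_def
  have hgc : Continuous g := hψc.norm.pow 2
  set D : ℝ → ℝ := fun x => 2 * ((ψ x).re * (deriv ψ x).re + (ψ x).im * (deriv ψ x).im)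
    with hD_def
  have hDc : Continuous D := by fun_prop
  have hnorm_sq : ∀ z : ℂ, ‖z‖ ^ 2 = z.re ^ 2 + z.im ^ 2 := by
    intro z
    rw [Complex.sq_norm, Complex.normSq_apply]
    ring
  have hgfun : g = fun t => (ψ t).re ^ 2 + (ψ t).im ^ 2 := by
    funext t; exact hnorm_sq (ψ t)
  have hgD : ∀ x, HasDerivAt g (D x) x := by
    intro x
    have hψx := (hψd x).hasDerivAt
    have hre : HasDerivAt (fun t => (ψ t).re) ((deriv ψ x).re) x :=
      Complex.reCLM.hasFDerivAt.comp_hasDerivAt x hψx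
    have him : HasDerivAt (fun t => (ψ t).im) ((deriv ψ x).im) x :=
      Complex.imCLM.hasFDerivAt.comp_hasDerivAt x hψx
    have h1 := (hre.pow 2).add (him.pow 2)
    rw [hgfun]
    refine HasDerivAt.congr_deriv (f := fun t => (ψ t).re ^ 2 + (ψ t).im ^ 2) h1 ?_
    simp only [hD_def]
    push_cast
    ring
  have hφ' : ∀ y, HasDerivAt φ (g (b + y) - g (a + y)) y := by
    intro y
    have hF : ∀ u : ℝ, HasDerivAt (fun u => ∫ t in (0:ℝ)..u, g t) (g u) u := fun u =>
      intervalIntegral.integral_hasDerivAt_right (hgc.intervalIntegrable 0 u)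
        (hgc.stronglyMeasurableAtFilter _ _) hgc.continuousAt
    have hb : HasDerivAt (fun y : ℝ => ∫ t in (0:ℝ)..(b + y), g t) (g (b + y)) y := by
      have := (hF (b + y)).comp y ((hasDerivAt_id y).const_add b)
      simpa [Function.comp_def] using this
    have ha : HasDerivAt (fun y : ℝ => ∫ t in (0:ℝ)..(a + y), g t) (g (a + y)) y := by
      have := (hF (a + y)).comp y ((hasDerivAt_id y).const_add a)
      simpa [Function.comp_def] using this
    have hfun : φ = fun y : ℝ =>
        (∫ t in (0:ℝ)..(b + y), g t) - ∫ t in (0:ℝ)..(a + y), g t := by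
      funext y
      rw [hφ y,
        intervalIntegral.integral_interval_sub_left (hgc.intervalIntegrable _ _)
          (hgc.intervalIntegrable _ _),
        intervalIntegral.integral_of_le (by linarith : a + y ≤ b + y),
        ← integral_Icc_eq_integral_Ioc]
    rw [hfun]
    exact hb.sub ha
  have key : ∀ y, g (b + y) - g (a + y) = ∫ x in Set.Icc (a + y) (b + y), D x := by
    intro y
    have h1 : ∫ t in (a + y)..(b + y), D t = g (b + y) - g (a + y) :=
      intervalIntegral.integral_eq_sub_of_hasDerivAt (fun t _ => hgD t)
        (hDc.intervalIntegrable _ _)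
    rw [← h1, intervalIntegral.integral_of_le (by linarith : a + y ≤ b + y),
      ← integral_Icc_eq_integral_Ioc]
  refine ⟨fun y => (hφ' y).differentiableAt, fun y => ?_⟩
  set c := a + y
  set d := b + y
  have hpt : ∀ x, |D x| ≤ 2 * (‖ψ x‖ * ‖deriv ψ x‖) := by
    intro x
    have h1 := hnorm_sq (ψ x)
    have h2 := hnorm_sq (deriv ψ x)
    have h3 : (0:ℝ) ≤ ‖ψ x‖ := norm_nonneg _
    have h4 : (0:ℝ) ≤ ‖deriv ψ x‖ := norm_nonneg _
    have h5 : (0:ℝ) ≤ ‖ψ x‖ * ‖deriv ψ x‖ := mul_nonneg h3 h4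
    have hid : ((ψ x).re * (deriv ψ x).re + (ψ x).im * (deriv ψ x).im) ^ 2 +
        ((ψ x).re * (deriv ψ x).im - (ψ x).im * (deriv ψ x).re) ^ 2 =
        (‖ψ x‖ * ‖deriv ψ x‖) ^ 2 := by
      rw [mul_pow, h1, h2]; ring
    have hDx : D x = 2 * ((ψ x).re * (deriv ψ x).re + (ψ x).im * (deriv ψ x).im) := rfl
    rw [hDx, abs_le]
    constructor
    · nlinarith [hid, sq_nonneg ((ψ x).re * (deriv ψ x).im - (ψ x).im * (deriv ψ x).re)]
    · nlinarith [hid, sq_nonneg ((ψ x).re * (deriv ψ x).im - (ψ x).im * (deriv ψ x).re)]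
  haveI : IsFiniteMeasure (volume.restrict (Set.Icc c d)) :=
    ⟨by rw [Measure.restrict_apply_univ]; exact measure_Icc_lt_top⟩
  have hmem : ∀ f : ℝ → ℝ, Continuous f → MemLp f 2 (volume.restrict (Set.Icc c d)) := by
    intro f hf
    obtain ⟨C, hC⟩ :=
      (isCompact_Icc : IsCompact (Set.Icc c d)).exists_bound_of_continuousOn hf.continuousOn
    exact (memLp_top_of_bound hf.aestronglyMeasurable C
      ((ae_restrict_iff' measurableSet_Icc).2 (ae_of_all _ hC))).mono_exponent le_top
  have hCS : ∫ x in Set.Icc c d, ‖ψ x‖ * ‖deriv ψ x‖ ≤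
      Real.sqrt (∫ x in Set.Icc c d, ‖ψ x‖ ^ 2) *
        Real.sqrt (∫ x in Set.Icc c d, ‖deriv ψ x‖ ^ 2) := by
    have h2 : (2:ℝ).HolderConjugate 2 := Real.HolderConjugate.two_two
    have h2' : ENNReal.ofReal (2:ℝ) = 2 := by norm_num
    have hH := integral_mul_le_Lp_mul_Lq_of_nonneg h2
      (ae_of_all _ fun x => norm_nonneg (ψ x))
      (ae_of_all _ fun x => norm_nonneg (deriv ψ x))
      (h2' ▸ hmem _ hψc.norm) (h2' ▸ hmem _ hψ'c.norm)
    simp only [rpow_two'] at hH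
    rw [← Real.sqrt_eq_rpow, ← Real.sqrt_eq_rpow] at hH
    exact hH
  rw [(hφ' y).deriv, key y]
  calc |∫ x in Set.Icc c d, D x| ≤ ∫ x in Set.Icc c d, |D x| :=
        by
        simpa [Real.norm_eq_abs] using
          norm_integral_le_integral_norm (μ := volume.restrict (Set.Icc c d)) D
    _ ≤ ∫ x in Set.Icc c d, 2 * (‖ψ x‖ * ‖deriv ψ x‖) :=
        setIntegral_mono_on (hDc.abs.integrableOn_Icc)
          ((by fun_prop : Continuous fun x => 2 * (‖ψ x‖ * ‖deriv ψ x‖)).integrableOn_Icc)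
          measurableSet_Icc (fun x _ => hpt x)
    _ = 2 * ∫ x in Set.Icc c d, ‖ψ x‖ * ‖deriv ψ x‖ := integral_const_mul 2 _
    _ ≤ 2 * (Real.sqrt (∫ x in Set.Icc c d, ‖ψ x‖ ^ 2) *
          Real.sqrt (∫ x in Set.Icc c d, ‖deriv ψ x‖ ^ 2)) := by
        have := mul_le_mul_of_nonneg_left hCS (by norm_num : (0:ℝ) ≤ 2)
        exact this
    _ = 2 * Real.sqrt (∫ x in Set.Icc c d, ‖ψ x‖ ^ 2) *
          Real.sqrt (∫ x in Set.Icc c d, ‖deriv ψ x‖ ^ 2) := by ring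
end

section
/- For every M > 0 and every s ∈ (0,1] there exists a constant C₆ > 0, depending only on M and s, with the following property: let J ⊆ ℝ be an interval, V : ℝ → ℝ measurable, E ∈ ℝ with |V(x) − E| ≤ M for almost every x ∈ J, and let ψ : ℝ → ℂ be twice continuously differentiable and satisfy −ψ'' + Vψ = Eψ on J. Fix k ∈ ℝ and define φ(y) := ∫_{k+y−s/2}^{k+y+s/2} |ψ(x)|² dx. Then for every y ∈ ℝ such that [k+y−s/2, k+y+s/2] ⊆ J one has |φ'(y)| ≤ C₆ φ(y); consequently if [k+y'−s/2, k+y'+s/2] ⊆ J for all y' between 0 and y, then φ(y) ≤ e^{C₆ |y|} φ(0). -/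
open MeasureTheory intervalIntegral Set
open scoped Interval

set_option maxHeartbeats 1000000


lemma taylor_step (ψ : ℝ → ℂ) (hψ : ContDiff ℝ 2 ψ) (p t : ℝ) :
    ψ p = ψ t + ((p - t : ℝ) : ℂ) * deriv ψ t + ∫ u in t..p, ((p - u : ℝ) : ℂ) * deriv (deriv ψ) u := by
  have hd1 : Differentiable ℝ ψ := hψ.differentiable (by norm_num)
  have hψ' : ContDiff ℝ 1 (deriv ψ) := ((contDiff_succ_iff_deriv (n := 1)).mp hψ).2.2
  have hd2 : Differentiable ℝ (deriv ψ) := hψ'.differentiable (by norm_num)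
  have hc2 : Continuous (deriv (deriv ψ)) :=
    ((contDiff_succ_iff_deriv (n := 0)).mp hψ').2.2.continuous
  set h : ℝ → ℂ := fun u => ψ u + ((p - u : ℝ) : ℂ) * deriv ψ u with hh
  have hderiv : ∀ u, HasDerivAt h (((p - u : ℝ) : ℂ) * deriv (deriv ψ) u) u := by
    intro u
    have h1 : HasDerivAt ψ (deriv ψ u) u := (hd1 u).hasDerivAt
    have h2 : HasDerivAt (fun u => ((p - u : ℝ) : ℂ)) (-1 : ℂ) u := by
      have : HasDerivAt (fun u : ℝ => p - u) (-1) u := by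
        simpa using (hasDerivAt_id' u).const_sub p
      simpa using this.ofReal_comp
    have h3 : HasDerivAt (deriv ψ) (deriv (deriv ψ) u) u := (hd2 u).hasDerivAt
    have := h1.add (h2.mul h3)
    refine this.congr_deriv ?_
    ring
  have hint : ∫ u in t..p, ((p - u : ℝ) : ℂ) * deriv (deriv ψ) u = h p - h t := by
    apply integral_eq_sub_of_hasDerivAt (fun u _ => hderiv u)
    apply Continuous.intervalIntegrable
    exact (Complex.continuous_ofReal.comp (continuous_const.sub continuous_id)).mul hc2
  rw [hint, hh]
  simp

lemma endpoint_bound (M a b : ℝ) (hM : 0 ≤ M) (hab : a < b)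
    (ψ : ℝ → ℂ) (hψ : ContDiff ℝ 2 ψ)
    (hbd : ∀ᵐ x ∂(volume.restrict (Set.Icc a b)), ‖deriv (deriv ψ) x‖ ≤ M * ‖ψ x‖)
    (p : ℝ) (hp : p = a ∨ p = b) :
    ‖ψ p‖ ^ 2 ≤ (9 / (b - a) + (b - a) * M) ^ 2 * (b - a) *
      ∫ x in Set.Icc a b, ‖ψ x‖ ^ 2 := by
  have hd1 : Differentiable ℝ ψ := hψ.differentiable (by norm_num)
  have hψ' : ContDiff ℝ 1 (deriv ψ) := ((contDiff_succ_iff_deriv (n := 1)).mp hψ).2.2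
  have hd2 : Differentiable ℝ (deriv ψ) := hψ'.differentiable (by norm_num)
  have hc0 : Continuous ψ := hd1.continuous
  have hc1 : Continuous (deriv ψ) := hd2.continuous
  have hc2 : Continuous (deriv (deriv ψ)) :=
    ((contDiff_succ_iff_deriv (n := 0)).mp hψ').2.2.continuous
  set L := b - a with hLdef
  have hL0 : 0 < L := by simp [hLdef]; linarith
  have hpmem : p ∈ Set.Icc a b := by rcases hp with h | h <;> simp [h, hab.le]
  set w : ℝ → ℝ := fun t => 6 * (t - a) * (b - t) / L ^ 3 with hw
  set w' : ℝ → ℝ := fun t => 6 * (a + b - 2 * t) / L ^ 3 with hw'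
  have hwc : Continuous w := by fun_prop
  have hw_nonneg : ∀ t ∈ Set.Icc a b, 0 ≤ w t := by
    intro t ht
    have := ht.1; have := ht.2
    have : (0:ℝ) ≤ 6 * (t - a) * (b - t) := by nlinarith
    positivity
  -- integral of w is 1
  have hw_int : (∫ t in a..b, w t) = 1 := by
    have hP : ∀ t, HasDerivAt (fun t => 6 * ((b - a) * (t - a) ^ 2 / 2 - (t - a) ^ 3 / 3))
        (6 * (t - a) * (b - t)) t := by
      intro t
      have h1 : HasDerivAt (fun t : ℝ => t - a) 1 t := by
        simpa using (hasDerivAt_id t).sub_const a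
      have h2 := (h1.pow 2)
      have h3 := (h1.pow 3)
      have := (((h2.const_mul (b - a)).div_const 2).sub (h3.div_const 3)).const_mul 6
      refine this.congr_deriv ?_
      ring
    have h6 : (∫ t in a..b, 6 * (t - a) * (b - t)) = (b - a) ^ 3 := by
      rw [integral_eq_sub_of_hasDerivAt (fun t _ => hP t)]
      · ring
      · apply Continuous.intervalIntegrable; fun_prop
    have : (∫ t in a..b, w t) = (∫ t in a..b, 6 * (t - a) * (b - t)) / L ^ 3 := by
      simp only [hw]
      rw [intervalIntegral.integral_div]
    rw [this, h6, hLdef]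
    exact div_self (pow_ne_zero _ (sub_ne_zero.mpr hab.ne'))

  -- the remainder kernel
  set g : ℝ → ℂ := fun u => ((p - u : ℝ) : ℂ) * deriv (deriv ψ) u with hg
  have hgc : Continuous g := by
    exact (Complex.continuous_ofReal.comp (continuous_const.sub continuous_id)).mul hc2
  set R : ℝ → ℂ := fun t => ∫ u in t..p, g u with hR
  have hRc : Continuous R := by
    have h1 : Continuous fun t => ∫ u in a..t, g u :=
      intervalIntegral.continuous_primitive (fun _ _ => hgc.intervalIntegrable _ _) a
    have : R = fun t => (∫ u in a..p, g u) - ∫ u in a..t, g u := by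
      funext t
      simp only [hR]
      rw [← intervalIntegral.integral_interval_sub_left (hgc.intervalIntegrable a p)
        (hgc.intervalIntegrable a t)]
    rw [this]
    exact continuous_const.sub h1
  set f : ℝ → ℝ := fun t => w t * (p - t) with hf
  set f' : ℝ → ℝ := fun t => w' t * (p - t) - w t with hf'
  have hfc : Continuous f := by fun_prop
  have hf'c : Continuous f' := by fun_prop
  -- integrabilities
  have int1 : IntervalIntegrable (fun t => ((w t : ℝ) : ℂ) * ψ t) volume a b :=
    ((Complex.continuous_ofReal.comp hwc).mul hc0).intervalIntegrable _ _
  have int2 : IntervalIntegrable (fun t => ((f t : ℝ) : ℂ) * deriv ψ t) volume a b :=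
    ((Complex.continuous_ofReal.comp hfc).mul hc1).intervalIntegrable _ _
  have int3 : IntervalIntegrable (fun t => ((w t : ℝ) : ℂ) * R t) volume a b :=
    ((Complex.continuous_ofReal.comp hwc).mul hRc).intervalIntegrable _ _
  have int4 : IntervalIntegrable (fun t => ((f' t : ℝ) : ℂ) * ψ t) volume a b :=
    ((Complex.continuous_ofReal.comp hf'c).mul hc0).intervalIntegrable _ _
  -- integrated Taylor identity
  have hsplit : ψ p = (∫ t in a..b, ((w t : ℝ) : ℂ) * ψ t)
      + (∫ t in a..b, ((f t : ℝ) : ℂ) * deriv ψ t)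
      + ∫ t in a..b, ((w t : ℝ) : ℂ) * R t := by
    have h1 : ∀ t, ((w t : ℝ) : ℂ) * ψ p = ((w t : ℝ) : ℂ) * ψ t
        + ((f t : ℝ) : ℂ) * deriv ψ t + ((w t : ℝ) : ℂ) * R t := by
      intro t
      have ht := taylor_step ψ hψ p t
      calc ((w t : ℝ) : ℂ) * ψ p
          = ((w t : ℝ) : ℂ) * (ψ t + ((p - t : ℝ) : ℂ) * deriv ψ t + R t) := by rw [← ht]
        _ = ((w t : ℝ) : ℂ) * ψ t + ((f t : ℝ) : ℂ) * deriv ψ t + ((w t : ℝ) : ℂ) * R t := by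
            simp only [hf]; push_cast; ring
    have h2 : (∫ t in a..b, ((w t : ℝ) : ℂ) * ψ p) = ψ p := by
      rw [intervalIntegral.integral_mul_const, intervalIntegral.integral_ofReal, hw_int]
      simp
    rw [← h2]
    rw [intervalIntegral.integral_congr (g := fun t => ((w t : ℝ) : ℂ) * ψ t
      + ((f t : ℝ) : ℂ) * deriv ψ t + ((w t : ℝ) : ℂ) * R t) (fun t _ => h1 t)]
    rw [intervalIntegral.integral_add (int1.add int2) int3, intervalIntegral.integral_add int1 int2]
  -- integration by parts on the middle term
  have hf_deriv : ∀ t, HasDerivAt f (f' t) t := by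
    intro t
    have h1 : HasDerivAt (fun t : ℝ => 6 * (t - a)) 6 t := by
      simpa using ((hasDerivAt_id t).sub_const a).const_mul 6
    have h2 : HasDerivAt (fun t : ℝ => b - t) (-1) t := by
      simpa using (hasDerivAt_id' t).const_sub b
    have h3 : HasDerivAt (fun t : ℝ => p - t) (-1) t := by
      simpa using (hasDerivAt_id' t).const_sub p
    have h4 := ((h1.mul h2).div_const (L ^ 3)).mul h3
    have h5 : HasDerivAt f ((6 * (b - t) + 6 * (t - a) * -1) / L ^ 3 * (p - t)
        + 6 * (t - a) * (b - t) / L ^ 3 * -1) t := by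
      apply h4.congr_of_eventuallyEq
      filter_upwards with u
      simp only [hf, hw]
      rfl
    apply h5.congr_deriv
    simp only [hf', hw, hw']
    field_simp
    ring
  have hfa : f a = 0 := by simp [hf, hw]
  have hfb : f b = 0 := by simp [hf, hw]
  have hibp : (∫ t in a..b, ((f t : ℝ) : ℂ) * deriv ψ t)
      = - ∫ t in a..b, ((f' t : ℝ) : ℂ) * ψ t := by
    have := intervalIntegral.integral_mul_deriv_eq_deriv_mul (a := a) (b := b)
      (u := fun t => ((f t : ℝ) : ℂ)) (u' := fun t => ((f' t : ℝ) : ℂ))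
      (v := ψ) (v' := deriv ψ)
      (fun x _ => (hf_deriv x).ofReal_comp) (fun x _ => (hd1 x).hasDerivAt)
      ((Complex.continuous_ofReal.comp hf'c).intervalIntegrable _ _)
      (hc1.intervalIntegrable _ _)
    rw [this]
    simp only [hfa, hfb]
    push_cast
    ring
  -- the final identity
  have hid : ψ p = (∫ t in a..b, ((2 * w t - w' t * (p - t) : ℝ) : ℂ) * ψ t)
      + ∫ t in a..b, ((w t : ℝ) : ℂ) * R t := by
    have hkint : (∫ t in a..b, ((2 * w t - w' t * (p - t) : ℝ) : ℂ) * ψ t)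
        = (∫ t in a..b, ((w t : ℝ) : ℂ) * ψ t) - ∫ t in a..b, ((f' t : ℝ) : ℂ) * ψ t := by
      rw [← intervalIntegral.integral_sub int1 int4]
      apply intervalIntegral.integral_congr
      intro t _
      simp only [hf', hw, hw']
      push_cast
      ring
    rw [hkint, hsplit, hibp]
    ring

  -- norm estimates
  set Iψ := ∫ t in a..b, ‖ψ t‖ with hIψ
  have hIψ0 : 0 ≤ Iψ := intervalIntegral.integral_nonneg hab.le fun _ _ => norm_nonneg _
  have hIoc : Ι a b = Set.Ioc a b := uIoc_of_le hab.le
  have hker : ∀ t ∈ Set.Icc a b, |2 * w t - w' t * (p - t)| ≤ 9 / L := by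
    intro t ht
    have hkey : 2 * w t - w' t * (p - t)
        = (12 * (t - a) * (b - t) - 6 * (a + b - 2 * t) * (p - t)) / L ^ 3 := by
      simp only [hw, hw']
      field_simp
      ring
    have hL3 : (0:ℝ) < L ^ 3 := by positivity
    rw [hkey, abs_div, abs_of_pos hL3, div_le_iff₀ hL3]
    have h9 : 9 / L * L ^ 3 = 9 * L ^ 2 := by field_simp
    rw [h9, abs_le]
    have hX1 : 0 ≤ L - (a + b - 2 * t) := by
      simp only [hLdef]; linarith [ht.1, ht.2]
    have hX2 : 0 ≤ L + (a + b - 2 * t) := by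
      simp only [hLdef]; linarith [ht.1, ht.2]
    have hY1 : 0 ≤ L - (p - t) := by
      simp only [hLdef]; linarith [ht.1, hpmem.2]
    have hY2 : 0 ≤ L + (p - t) := by
      simp only [hLdef]; linarith [ht.2, hpmem.1]
    constructor <;>
      nlinarith [mul_nonneg hX1 hY2, mul_nonneg hX2 hY1, mul_nonneg hX1 hY1,
        mul_nonneg hX2 hY2, mul_nonneg (sub_nonneg.2 ht.1) (sub_nonneg.2 ht.2),
        hL0, hLdef, sq_nonneg (a + b - 2 * t), sq_nonneg (t - a), sq_nonneg (b - t)]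
  have hfirst : ‖∫ t in a..b, ((2 * w t - w' t * (p - t) : ℝ) : ℂ) * ψ t‖ ≤ 9 / L * Iψ := by
    have hb := intervalIntegral.norm_integral_le_abs_of_norm_le (μ := volume) (a := a) (b := b)
      (f := fun t => ((2 * w t - w' t * (p - t) : ℝ) : ℂ) * ψ t)
      (g := fun t => 9 / L * ‖ψ t‖) ?_ ?_
    · refine hb.trans ?_
      rw [intervalIntegral.integral_const_mul, abs_of_nonneg]
      positivity
    · filter_upwards [ae_restrict_mem measurableSet_uIoc] with t ht
      have ht' : t ∈ Set.Icc a b := by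
        rw [hIoc] at ht; exact Set.Ioc_subset_Icc_self ht
      rw [norm_mul, Complex.norm_real]
      exact mul_le_mul_of_nonneg_right (hker t ht') (norm_nonneg _)
    · exact (Continuous.intervalIntegrable (by fun_prop) _ _)
  have hRb : ∀ t ∈ Ι a b, ‖R t‖ ≤ L * M * Iψ := by
    intro t ht
    have ht' : t ∈ Set.Ioc a b := by rwa [hIoc] at ht
    have hsub : Ι t p ⊆ Set.Icc a b := by
      intro u hu
      have hu' : u ∈ Set.Ioc (min t p) (max t p) := hu
      constructor
      · exact le_of_lt (lt_of_le_of_lt (le_min ht'.1.le hpmem.1) hu'.1)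
      · exact hu'.2.trans (max_le ht'.2 hpmem.2)
    have hae : ∀ᵐ u ∂volume.restrict (Ι t p),
        ‖((p - u : ℝ) : ℂ) * deriv (deriv ψ) u‖ ≤ L * (M * ‖ψ u‖) := by
      filter_upwards [ae_restrict_of_ae_restrict_of_subset hsub hbd,
        ae_restrict_mem measurableSet_uIoc] with u h1 h2
      have hu' : u ∈ Set.Icc a b := hsub h2
      have hup : |p - u| ≤ L := by
        rw [abs_le]
        constructor <;> simp only [hLdef] <;> linarith [hu'.1, hu'.2, hpmem.1, hpmem.2]
      rw [norm_mul, Complex.norm_real]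
      exact mul_le_mul hup h1 (norm_nonneg _) hL0.le
    have h1 : ‖R t‖ ≤ |∫ u in t..p, L * (M * ‖ψ u‖)| := by
      simp only [hR]
      exact intervalIntegral.norm_integral_le_abs_of_norm_le hae
        (Continuous.intervalIntegrable (by fun_prop) _ _)
    have h2 : |∫ u in t..p, L * (M * ‖ψ u‖)| ≤ ∫ u in a..b, L * (M * ‖ψ u‖) := by
      have habs : |∫ u in a..b, L * (M * ‖ψ u‖)| = ∫ u in a..b, L * (M * ‖ψ u‖) :=
        abs_of_nonneg (intervalIntegral.integral_nonneg hab.le fun u _ => by positivity)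
      rw [← habs]
      apply intervalIntegral.abs_integral_mono_interval (μ := volume)
        (f := fun u => L * (M * ‖ψ u‖)) (a := t) (b := p) (c := a) (d := b)
      · rw [hIoc]
        intro u hu
        have hu' : u ∈ Set.Ioc (min t p) (max t p) := hu
        exact ⟨lt_of_le_of_lt (le_min ht'.1.le hpmem.1) hu'.1,
          hu'.2.trans (max_le ht'.2 hpmem.2)⟩
      · filter_upwards with u
        positivity
      · exact (Continuous.intervalIntegrable (by fun_prop) _ _)
    have h3 : (∫ u in a..b, L * (M * ‖ψ u‖)) = L * M * Iψ := by
      rw [intervalIntegral.integral_const_mul, intervalIntegral.integral_const_mul]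
      ring
    linarith
  have hsecond : ‖∫ t in a..b, ((w t : ℝ) : ℂ) * R t‖ ≤ L * M * Iψ := by
    have hC0 : 0 ≤ L * M * Iψ := by positivity
    have hb := intervalIntegral.norm_integral_le_abs_of_norm_le (μ := volume) (a := a) (b := b)
      (f := fun t => ((w t : ℝ) : ℂ) * R t)
      (g := fun t => w t * (L * M * Iψ)) ?_ ?_
    · refine hb.trans ?_
      rw [intervalIntegral.integral_mul_const, hw_int, one_mul, abs_of_nonneg hC0]
    · filter_upwards [ae_restrict_mem measurableSet_uIoc] with t ht
      have ht' : t ∈ Set.Icc a b := by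
        rw [hIoc] at ht; exact Set.Ioc_subset_Icc_self ht
      rw [norm_mul, Complex.norm_real, Real.norm_eq_abs, abs_of_nonneg (hw_nonneg t ht')]
      exact mul_le_mul_of_nonneg_left (hRb t ht) (hw_nonneg t ht')
    · exact (Continuous.intervalIntegrable (hwc.mul continuous_const) _ _)
  have hnorm : ‖ψ p‖ ≤ (9 / L + L * M) * Iψ := by
    have := norm_add_le (∫ t in a..b, ((2 * w t - w' t * (p - t) : ℝ) : ℂ) * ψ t)
      (∫ t in a..b, ((w t : ℝ) : ℂ) * R t)
    rw [← hid] at this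
    have he : (9 / L + L * M) * Iψ = 9 / L * Iψ + L * M * Iψ := by ring
    rw [he]
    exact this.trans (add_le_add hfirst hsecond)
  -- Cauchy-Schwarz
  set S := ∫ x in Set.Icc a b, ‖ψ x‖ ^ 2 with hSdef
  have hS_eq : S = ∫ t in a..b, ‖ψ t‖ ^ 2 := by
    rw [hSdef, intervalIntegral.integral_of_le hab.le, ← integral_Icc_eq_integral_Ioc]
  have hCS : Iψ ^ 2 ≤ L * S := by
    have hexp : (0:ℝ) ≤ ∫ t in a..b, (‖ψ t‖ - Iψ / L) ^ 2 :=
      intervalIntegral.integral_nonneg hab.le fun t _ => sq_nonneg _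
    have hexpand : (∫ t in a..b, (‖ψ t‖ - Iψ / L) ^ 2)
        = S - 2 * (Iψ / L) * Iψ + (Iψ / L) ^ 2 * L := by
      have h1 : ∀ t : ℝ, (‖ψ t‖ - Iψ / L) ^ 2
          = ‖ψ t‖ ^ 2 - 2 * (Iψ / L) * ‖ψ t‖ + (Iψ / L) ^ 2 := fun t => by ring
      simp only [h1]
      have i1 : IntervalIntegrable (fun t => ‖ψ t‖ ^ 2) volume a b :=
        (Continuous.intervalIntegrable (by fun_prop) _ _)
      have i2 : IntervalIntegrable (fun t => 2 * (Iψ / L) * ‖ψ t‖) volume a b :=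
        (Continuous.intervalIntegrable (by fun_prop) _ _)
      rw [intervalIntegral.integral_add (i1.sub i2) intervalIntegrable_const,
        intervalIntegral.integral_sub i1 i2, intervalIntegral.integral_const_mul,
        intervalIntegral.integral_const, hS_eq, smul_eq_mul]
      rw [← hIψ, ← hLdef]
      ring
    have h0 : (0:ℝ) ≤ S - 2 * (Iψ / L) * Iψ + (Iψ / L) ^ 2 * L := hexpand ▸ hexp
    have e1 : 2 * (Iψ / L) * Iψ = 2 * Iψ ^ 2 / L := by ring
    have e2 : (Iψ / L) ^ 2 * L = Iψ ^ 2 / L := by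
      field_simp
    have hqL : Iψ / L * L = Iψ := div_mul_cancel₀ _ hL0.ne'
    have hq1 : Iψ / L * L * Iψ = Iψ ^ 2 := by rw [hqL]; ring
    have hq2 : (Iψ / L) ^ 2 * L ^ 2 = Iψ ^ 2 := by
      field_simp
    have h3 : (0:ℝ) ≤ L * (S - 2 * (Iψ / L) * Iψ + (Iψ / L) ^ 2 * L) := mul_nonneg hL0.le h0
    have h4 : L * (S - 2 * (Iψ / L) * Iψ + (Iψ / L) ^ 2 * L)
        = L * S - 2 * (Iψ / L * L * Iψ) + (Iψ / L) ^ 2 * L ^ 2 := by ring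
    rw [h4, hq1, hq2] at h3
    linarith
  have hS0 : 0 ≤ S := by
    rw [hS_eq]
    exact intervalIntegral.integral_nonneg hab.le fun t _ => sq_nonneg _
  calc ‖ψ p‖ ^ 2 ≤ ((9 / L + L * M) * Iψ) ^ 2 := by
        apply pow_le_pow_left₀ (norm_nonneg _) hnorm
    _ = (9 / L + L * M) ^ 2 * Iψ ^ 2 := by ring
    _ ≤ (9 / L + L * M) ^ 2 * (L * S) :=
        mul_le_mul_of_nonneg_left hCS (sq_nonneg _)
    _ = (9 / (b - a) + (b - a) * M) ^ 2 * (b - a) * S := by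
        rw [hLdef]; ring

/-- Differential inequality and Gronwall estimate for the translated `L²` mass of an
eigenfunction: for every `M > 0` and `s ∈ (0,1]` there is `C₆ > 0` (depending only on `M`
and `s`) such that for every interval `J`, potential `V` with `|V - E| ≤ M` a.e. on `J`,
`C²` eigenfunction `ψ` of `-ψ'' + Vψ = Eψ` on `J`, and every `k`, the function
`φ(y) = ∫_{Λ_s(k+y)} |ψ|²` satisfies `|φ'(y)| ≤ C₆ φ(y)` whenever `Λ_s(k+y) ⊆ J`, and
`φ(y) ≤ exp(C₆|y|) φ(0)` whenever `Λ_s(k+y') ⊆ J` for all `y'` between `0` and `y`. -/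
theorem mass_differential_inequality_and_gronwall
    (M : ℝ) (hM : 0 < M) (s : ℝ) (hs : s ∈ Set.Ioc (0 : ℝ) 1) :
    ∃ C₆ : ℝ, 0 < C₆ ∧
      ∀ (J : Set ℝ), J.OrdConnected →
      ∀ (V : ℝ → ℝ), Measurable V →
      ∀ (E : ℝ), (∀ᵐ x ∂(volume.restrict J), |V x - E| ≤ M) →
      ∀ (ψ : ℝ → ℂ), ContDiff ℝ 2 ψ →
      (∀ x ∈ J, -(deriv (deriv ψ) x) + (V x : ℂ) * ψ x = (E : ℂ) * ψ x) →
      ∀ (k : ℝ) (φ : ℝ → ℝ),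
        (∀ y, φ y = ∫ x in Set.Icc (k + y - s/2) (k + y + s/2), ‖ψ x‖ ^ 2) →
        (∀ y, Set.Icc (k + y - s/2) (k + y + s/2) ⊆ J → |deriv φ y| ≤ C₆ * φ y) ∧
        (∀ y, (∀ y' ∈ Set.uIcc 0 y, Set.Icc (k + y' - s/2) (k + y' + s/2) ⊆ J) →
          φ y ≤ Real.exp (C₆ * |y|) * φ 0) := by
  obtain ⟨hs0, hs1⟩ := hs
  refine ⟨(9 / s + s * M) ^ 2 * s, by positivity, ?_⟩
  intro J _hJ V _hV E hVb ψ hψc heq k φ hφ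
  set C₆ : ℝ := (9 / s + s * M) ^ 2 * s with hC₆
  have hC₆0 : 0 < C₆ := by positivity
  have hc0 : Continuous ψ := (hψc.differentiable (by norm_num)).continuous
  have hcont2 : Continuous fun x => ‖ψ x‖ ^ 2 := by fun_prop
  -- the primitive
  set F : ℝ → ℝ := fun x => ∫ t in (0:ℝ)..x, ‖ψ t‖ ^ 2 with hF
  have hFd : ∀ x, HasDerivAt F (‖ψ x‖ ^ 2) x := by
    intro x
    exact intervalIntegral.integral_hasDerivAt_right
      (hcont2.intervalIntegrable _ _)
      (hcont2.stronglyMeasurableAtFilter _ _)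
      hcont2.continuousAt
  have hφeq : ∀ y, φ y = F (k + y + s/2) - F (k + y - s/2) := by
    intro y
    rw [hφ y, hF]
    have hle : k + y - s/2 ≤ k + y + s/2 := by linarith
    rw [intervalIntegral.integral_interval_sub_left
      (hcont2.intervalIntegrable _ _) (hcont2.intervalIntegrable _ _)]
    rw [intervalIntegral.integral_of_le hle, ← integral_Icc_eq_integral_Ioc]
  have hφd : ∀ y, HasDerivAt φ
      (‖ψ (k + y + s/2)‖ ^ 2 - ‖ψ (k + y - s/2)‖ ^ 2) y := by
    intro y
    have hg1 : HasDerivAt (fun y : ℝ => k + y + s/2) 1 y := by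
      simpa using ((hasDerivAt_id y).const_add k).add_const (s/2)
    have hg2 : HasDerivAt (fun y : ℝ => k + y - s/2) 1 y := by
      simpa using ((hasDerivAt_id y).const_add k).sub_const (s/2)
    have h1 : HasDerivAt (fun y : ℝ => F (k + y + s/2)) (‖ψ (k + y + s/2)‖ ^ 2) y := by
      have h := (hFd (k + y + s/2)).comp y hg1; rw [mul_one] at h; exact h
    have h2 : HasDerivAt (fun y : ℝ => F (k + y - s/2)) (‖ψ (k + y - s/2)‖ ^ 2) y := by
      have h := (hFd (k + y - s/2)).comp y hg2; rw [mul_one] at h; exact h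
    exact (h1.sub h2).congr_of_eventuallyEq
      (Filter.Eventually.of_forall fun y => hφeq y)
  have hφ_nonneg : ∀ y, 0 ≤ φ y := by
    intro y
    rw [hφ y]
    exact setIntegral_nonneg measurableSet_Icc fun x _ => sq_nonneg _
  -- part 1
  have part1 : ∀ y, Set.Icc (k + y - s/2) (k + y + s/2) ⊆ J → |deriv φ y| ≤ C₆ * φ y := by
    intro y hsubJ
    set aY := k + y - s/2 with haY
    set bY := k + y + s/2 with hbY
    have hab : aY < bY := by simp only [haY, hbY]; linarith
    have hsdiff : bY - aY = s := by simp only [haY, hbY]; ring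
    have hbd : ∀ᵐ x ∂(volume.restrict (Set.Icc aY bY)),
        ‖deriv (deriv ψ) x‖ ≤ M * ‖ψ x‖ := by
      filter_upwards [ae_restrict_of_ae_restrict_of_subset hsubJ hVb,
        ae_restrict_mem measurableSet_Icc] with x h1 h2
      have hx : x ∈ J := hsubJ h2
      have hxe : deriv (deriv ψ) x = ((V x - E : ℝ) : ℂ) * ψ x := by
        push_cast
        linear_combination - heq x hx
      rw [hxe, norm_mul, Complex.norm_real, Real.norm_eq_abs]
      exact mul_le_mul_of_nonneg_right h1 (norm_nonneg _)
    have hA := endpoint_bound M aY bY hM.le hab ψ hψc hbd aY (Or.inl rfl)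
    have hB := endpoint_bound M aY bY hM.le hab ψ hψc hbd bY (Or.inr rfl)
    rw [hsdiff] at hA hB
    rw [← hφ y] at hA hB
    have hd : deriv φ y = ‖ψ bY‖ ^ 2 - ‖ψ aY‖ ^ 2 := (hφd y).deriv
    rw [hd, abs_le]
    constructor
    · have := sq_nonneg ‖ψ bY‖
      simp only [hC₆]
      nlinarith [hB, hA, sq_nonneg ‖ψ aY‖]
    · simp only [hC₆]
      nlinarith [hB, hA, sq_nonneg ‖ψ aY‖, sq_nonneg ‖ψ bY‖]
  refine ⟨part1, ?_⟩
  -- part 2: Gronwall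
  intro y hJall
  have hbound : ∀ y' ∈ Set.uIcc 0 y, |deriv φ y'| ≤ C₆ * φ y' :=
    fun y' hy' => part1 y' (hJall y' hy')
  rcases le_or_gt 0 y with hy | hy
  · have huIcc : Set.uIcc (0:ℝ) y = Set.Icc 0 y := Set.uIcc_of_le hy
    have key := norm_le_gronwallBound_of_norm_deriv_right_le (f := φ)
      (f' := deriv φ) (δ := φ 0) (K := C₆) (ε := 0) (a := 0) (b := y)
      (fun x _ => (hφd x).continuousAt.continuousWithinAt)
      (fun x _ => ((hφd x).hasDerivWithinAt.congr_deriv (hφd x).deriv.symm))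
      (by rw [Real.norm_eq_abs, abs_of_nonneg (hφ_nonneg 0)])
      ?_ y (by constructor <;> linarith)
    · rw [Real.norm_eq_abs, gronwallBound_ε0] at key
      have h1 : φ y ≤ |φ y| := le_abs_self _
      rw [abs_of_nonneg hy]
      calc φ y ≤ |φ y| := h1
        _ ≤ φ 0 * Real.exp (C₆ * (y - 0)) := key
        _ = Real.exp (C₆ * y) * φ 0 := by rw [sub_zero]; ring
    · intro x hx
      have hx' : x ∈ Set.uIcc 0 y := by
        rw [huIcc]; exact Set.Ico_subset_Icc_self hx
      rw [Real.norm_eq_abs, Real.norm_eq_abs, abs_of_nonneg (hφ_nonneg x), add_zero]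
      exact hbound x hx'
  · have huIcc : Set.uIcc (0:ℝ) y = Set.Icc y 0 := Set.uIcc_of_ge hy.le
    set χ : ℝ → ℝ := fun t => φ (-t) with hχ
    have hχd : ∀ t, HasDerivAt χ (-(deriv φ (-t))) t := by
      intro t
      have h1 : HasDerivAt (fun t : ℝ => -t) (-1) t := (hasDerivAt_id t).neg
      have h2 := ((hφd (-t)).congr_deriv (hφd (-t)).deriv.symm).comp t h1
      have h3 : HasDerivAt χ (deriv φ (-t) * -1) t := h2
      simpa using h3
    have key := norm_le_gronwallBound_of_norm_deriv_right_le (f := χ)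
      (f' := fun t => -(deriv φ (-t))) (δ := φ 0) (K := C₆) (ε := 0) (a := 0) (b := -y)
      (fun x _ => (hχd x).continuousAt.continuousWithinAt)
      (fun x _ => (hχd x).hasDerivWithinAt)
      (by simp only [hχ, neg_zero]; rw [Real.norm_eq_abs, abs_of_nonneg (hφ_nonneg 0)])
      ?_ (-y) (by constructor <;> linarith)
    · rw [Real.norm_eq_abs, gronwallBound_ε0] at key
      have h2 : χ (-y) = φ y := by simp [hχ]
      rw [h2] at key
      have h1 : φ y ≤ |φ y| := le_abs_self _
      rw [abs_of_neg hy]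
      calc φ y ≤ |φ y| := h1
        _ ≤ φ 0 * Real.exp (C₆ * (-y - 0)) := key
        _ = Real.exp (C₆ * -y) * φ 0 := by rw [sub_zero]; ring
    · intro x hx
      have hx' : -x ∈ Set.uIcc 0 y := by
        rw [huIcc]
        constructor <;> [linarith [hx.2]; linarith [hx.1] ]
      rw [Real.norm_eq_abs, Real.norm_eq_abs, abs_neg, abs_of_nonneg (hφ_nonneg (-x)), add_zero]
      exact hbound (-x) hx'
end
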